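/- arXiv:2304.11887 — 2 statements merged into one kernel-verified Lean document; each statement's English description precedes it below -/
import Mathlib

section
/- (Flux of a rigid field through a power-cup graph over a half-disc.) Let α ∈ (0,1], k > 0, h ∈ ℝ, ρ > 0, γ ∈ ℝ, and let g(x') := h + k|x'|^{1+α} for x' = (x₁,x₂) ∈ ℝ². For all u_P = (u_{P1},u_{P2},u_{P3}) ∈ ℝ³ and ω = (ω₁,ω₂,ω₃) ∈ ℝ³, the rigid field u(x) := u_P + ω × (x − (0,0,h)) satisfies the exact identity: ∫_{D_{ρ,γ}} u(x', g(x')) · (−∂_{x₁}g(x'), −∂_{x₂}g(x'), 1) dx' = (π/2)ρ² u_{P3} + (2k(1+α)/(2+α)) ρ^{2+α} (u_{P1} sin γ − u_{P2} cos γ) + ( 2/3 + (2k²(1+α)/(2α+3)) ρ^{2α} ) ρ³ (ω₁ cos γ + ω₂ sin γ), where D_{ρ,γ} := {(r cos θ, r sin θ) : 0 < r < ρ, γ ≤ θ < π + γ} and the integral is the two-dimensional Lebesgue integral. -/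
noncomputable section

open MeasureTheory Real Set Filter
open scoped RealInnerProductSpace

/-- `ℝ³` with the Euclidean norm. -/
abbrev V3 : Type := EuclideanSpace ℝ (Fin 3)

/-- `ℝ²` with the Euclidean norm. -/
abbrev E2 : Type := EuclideanSpace ℝ (Fin 2)

/-- The point of `ℝ³` with coordinates `(a, b, c)`. -/
def mk3 (a b c : ℝ) : V3 := (WithLp.equiv 2 (Fin 3 → ℝ)).symm ![a, b, c]

/-- The point of `ℝ²` with coordinates `(a, b)`. -/
def mk2 (a b : ℝ) : E2 := (WithLp.equiv 2 (Fin 2 → ℝ)).symm ![a, b]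

/-- `|x'|`: the Euclidean norm of the horizontal part `(x₁, x₂)` of `x ∈ ℝ³`. -/
def pnorm (x : V3) : ℝ := Real.sqrt ((x 0) ^ 2 + (x 1) ^ 2)

/-- The cross product in `ℝ³`. -/
def cross3 (a b : V3) : V3 :=
  mk3 (a 1 * b 2 - a 2 * b 1) (a 2 * b 0 - a 0 * b 2) (a 0 * b 1 - a 1 * b 0)

/-- `div u = 0` almost everywhere (with `fderiv` the a.e. derivative of the
Lipschitz field `u`). -/
def DivFree (u : V3 → V3) : Prop :=
  ∀ᵐ x ∂(volume : Measure V3),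
    (∑ i : Fin 3, fderiv ℝ u x (EuclideanSpace.single i 1) i) = 0

/-- `u` is an admissible rigid-body field of class `W^{1,p}_0(S, Ω)` with rigid data
`(u_*, ω)` about the point `x_*`:  `u` is Lipschitz, vanishes outside `Ω`,
is divergence free a.e., and is the rigid field `u_* + ω × (x - x_*)` on `S`. -/
def RigidField (S Ω : Set V3) (u : V3 → V3) (ustar ω xstar : V3) : Prop :=
  (∃ L, LipschitzWith L u) ∧ (∀ x ∉ Ω, u x = 0) ∧ DivFree u ∧
    xstar ∈ closure S ∧ ∀ x ∈ S, u x = ustar + cross3 ω (x - xstar)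

/-- `‖∇u‖_{L^p(A)}`. -/
def gradLp (p : ℝ) (u : V3 → V3) (A : Set V3) : ℝ :=
  (∫ x in A, ‖fderiv ℝ u x‖ ^ p) ^ (1 / p)

/-- `‖∇²u‖_{L²(A)}`. -/
def grad2L2 (u : V3 → V3) (A : Set V3) : ℝ :=
  (∫ x in A, ‖iteratedFDeriv ℝ 2 u x‖ ^ (2 : ℝ)) ^ (1 / (2 : ℝ))

/-- The region `{k |x'|^{1+α} < |x₃| < k σ₀^{1+α}, |x'| < σ₀}` excluded from the
boundary in the definition of a uniformly `C^{1,α}` domain. -/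
def cuspRegion (k σ₀ α : ℝ) : Set V3 :=
  {x : V3 | k * pnorm x ^ (1 + α) < |x 2| ∧ |x 2| < k * σ₀ ^ (1 + α) ∧ pnorm x < σ₀}

/-- `D` is a uniformly `C^{1,α}` domain with constants `k`, `σ₀`. -/
def UnifC1alpha (D : Set V3) (α k σ₀ : ℝ) : Prop :=
  ∀ x₀ ∈ frontier D, ∃ R : V3 ≃ᵢ V3, R 0 = x₀ ∧
    (R '' cuspRegion k σ₀ α) ∩ frontier D = ∅

/-- The rigid vector field with translational velocity `uP` and angular velocity `ω`
about the point `(0,0,h)`. -/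
def rigidAt (uP ω : V3) (h : ℝ) (x : V3) : V3 := uP + cross3 ω (x - mk3 0 0 h)

/-- The half-disc `D_{ρ,γ} = {(r cos θ, r sin θ) : 0 < r < ρ, γ ≤ θ < π + γ} ⊆ ℝ²`. -/
def halfDisc (ρ γ : ℝ) : Set E2 :=
  {y : E2 | ∃ r θ : ℝ, 0 < r ∧ r < ρ ∧ γ ≤ θ ∧ θ < Real.pi + γ ∧
    y = mk2 (r * Real.cos θ) (r * Real.sin θ)}

/- ### auxiliary lemmas -/

lemma injon_polar (ρ γ : ℝ) : InjOn polarCoord.symm (Ioo 0 ρ ×ˢ Ico γ (π + γ)) := by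
  rintro ⟨r1, θ1⟩ ⟨⟨hr1, -⟩, hθ1a, hθ1b⟩ ⟨r2, θ2⟩ ⟨⟨hr2, -⟩, hθ2a, hθ2b⟩ heq
  simp only [polarCoord_symm_apply, Prod.mk.injEq] at heq
  simp only [mem_Ico] at *
  obtain ⟨h1, h2⟩ := heq
  have hr : r1 = r2 := by
    have e1 := congrArg (· ^ 2) h1
    have e2 := congrArg (· ^ 2) h2
    have : r1 ^ 2 = r2 ^ 2 := by
      nlinarith [sin_sq_add_cos_sq θ1, sin_sq_add_cos_sq θ2]
    nlinarith
  subst hr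
  have hc : cos θ1 = cos θ2 := mul_left_cancel₀ (ne_of_gt hr1) h1
  have hsin : sin θ1 = sin θ2 := mul_left_cancel₀ (ne_of_gt hr1) h2
  have hcos1 : cos (θ1 - θ2) = 1 := by
    rw [cos_sub, hc, hsin]
    nlinarith [sin_sq_add_cos_sq θ2]
  obtain ⟨n, hn⟩ := (Real.cos_eq_one_iff _).1 hcos1
  have hlt : |θ1 - θ2| < 2 * π := by
    rw [abs_lt]
    constructor <;> nlinarith [pi_pos]
  have hn0 : n = 0 := by
    by_contra hne
    have h1n : (1 : ℝ) ≤ |(n : ℝ)| := by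
      have := Int.one_le_abs hne
      exact_mod_cast this
    have : 2 * π ≤ |θ1 - θ2| := by
      rw [← hn, abs_mul, abs_of_pos (by positivity : (0:ℝ) < 2 * π)]
      nlinarith [pi_pos]
    linarith
  rw [hn0] at hn
  simp only [Int.cast_zero, zero_mul] at hn
  have : θ1 = θ2 := by linarith [sub_eq_zero.1 hn.symm]
  simp [this]

def e2equiv : (ℝ × ℝ) ≃ᵐ E2 :=
  MeasurableEquiv.finTwoArrow.symm.trans (MeasurableEquiv.toLp 2 (Fin 2 → ℝ))

lemma e2equiv_mp : MeasurePreserving (⇑e2equiv) volume volume :=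
  ((EuclideanSpace.volume_preserving_symm_measurableEquiv_toLp (Fin 2)).symm _).comp
    ((MeasureTheory.volume_preserving_finTwoArrow ℝ).symm _)

lemma halfDisc_eq (ρ γ : ℝ) :
    halfDisc ρ γ = ⇑e2equiv '' (polarCoord.symm '' (Ioo 0 ρ ×ˢ Ico γ (π + γ))) := by
  ext y
  constructor
  · rintro ⟨r, θ, h1, h2, h3, h4, rfl⟩
    exact ⟨(r * cos θ, r * sin θ), ⟨(r, θ), ⟨⟨h1, h2⟩, h3, h4⟩, rfl⟩, rfl⟩
  · rintro ⟨q, ⟨⟨r, θ⟩, ⟨⟨h1, h2⟩, h3, h4⟩, rfl⟩, rfl⟩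
    exact ⟨r, θ, h1, h2, h3, h4, rfl⟩

lemma norm_mk2_polar {r : ℝ} (θ : ℝ) (hr : 0 ≤ r) : ‖mk2 (r * cos θ) (r * sin θ)‖ = r := by
  have : ‖mk2 (r * cos θ) (r * sin θ)‖ = Real.sqrt ((r * cos θ) ^ 2 + (r * sin θ) ^ 2) := by
    simp [EuclideanSpace.norm_eq, mk2]
  rw [this, show (r * cos θ) ^ 2 + (r * sin θ) ^ 2 = r ^ 2 by
    nlinarith [sin_sq_add_cos_sq θ], Real.sqrt_sq hr]

lemma set_int_rpow (ρ a : ℝ) (hρ : 0 < ρ) (ha : -1 < a) :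
    ∫ x in Ioo (0:ℝ) ρ, x ^ a = ρ ^ (a + 1) / (a + 1) := by
  rw [← integral_Ioc_eq_integral_Ioo, ← intervalIntegral.integral_of_le hρ.le,
    integral_rpow (Or.inl ha), Real.zero_rpow (by linarith), sub_zero]

lemma set_int_id (ρ : ℝ) (hρ : 0 < ρ) : ∫ x in Ioo (0:ℝ) ρ, x = ρ ^ 2 / 2 := by
  rw [← integral_Ioc_eq_integral_Ioo, ← intervalIntegral.integral_of_le hρ.le, integral_id]
  ring

lemma set_int_sin (γ : ℝ) : ∫ θ in Ico γ (π + γ), Real.sin θ = 2 * Real.cos γ := by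
  rw [integral_Ico_eq_integral_Ioo, ← integral_Ioc_eq_integral_Ioo,
    ← intervalIntegral.integral_of_le (by linarith [pi_pos]), integral_sin]
  simp [cos_add]
  ring

lemma set_int_cos (γ : ℝ) : ∫ θ in Ico γ (π + γ), Real.cos θ = -(2 * Real.sin γ) := by
  rw [integral_Ico_eq_integral_Ioo, ← integral_Ioc_eq_integral_Ioo,
    ← intervalIntegral.integral_of_le (by linarith [pi_pos]), integral_cos]
  simp [sin_add]
  ring

lemma set_int_one (γ : ℝ) : ∫ _ in Ico γ (π + γ), (1:ℝ) = π := by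
  simp only [setIntegral_const, smul_eq_mul, mul_one, Real.volume_Ico]
  rw [Real.volume_real_Ico, show π + γ - γ = π by ring, max_eq_left pi_pos.le]

lemma key_pointwise (α k h : ℝ) (uP ω : V3) (r θ : ℝ) (hr : 0 < r) :
    (let y : E2 := mk2 (r * cos θ) (r * sin θ);
     r * ((rigidAt uP ω h (mk3 (y 0) (y 1) (h + k * ‖y‖ ^ (1 + α)))) 2 -
          (rigidAt uP ω h (mk3 (y 0) (y 1) (h + k * ‖y‖ ^ (1 + α)))) 0 *
            (k * (1 + α) * ‖y‖ ^ (α - 1) * y 0) -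
          (rigidAt uP ω h (mk3 (y 0) (y 1) (h + k * ‖y‖ ^ (1 + α)))) 1 *
            (k * (1 + α) * ‖y‖ ^ (α - 1) * y 1))) =
      (uP 2 * r) * 1 +
      (ω 0 * (r ^ (2:ℝ) + k ^ 2 * (1 + α) * r ^ (2 * α + 2))) * Real.sin θ -
      (ω 1 * (r ^ (2:ℝ) + k ^ 2 * (1 + α) * r ^ (2 * α + 2))) * Real.cos θ -
      (k * (1 + α) * uP 0 * r ^ (1 + α)) * Real.cos θ -
      (k * (1 + α) * uP 1 * r ^ (1 + α)) * Real.sin θ := by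
  have hy0 : (mk2 (r * cos θ) (r * sin θ)) 0 = r * cos θ := rfl
  have hy1 : (mk2 (r * cos θ) (r * sin θ)) 1 = r * sin θ := rfl
  have c0 : ∀ a b c : ℝ, rigidAt uP ω h (mk3 a b c) 0 = uP 0 + (ω 1 * (c - h) - ω 2 * (b - 0)) :=
    fun _ _ _ => rfl
  have c1 : ∀ a b c : ℝ, rigidAt uP ω h (mk3 a b c) 1 = uP 1 + (ω 2 * (a - 0) - ω 0 * (c - h)) :=
    fun _ _ _ => rfl
  have c2 : ∀ a b c : ℝ, rigidAt uP ω h (mk3 a b c) 2 = uP 2 + (ω 0 * (b - 0) - ω 1 * (a - 0)) :=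
    fun _ _ _ => rfl
  simp only [hy0, hy1, norm_mk2_polar θ hr.le, c0, c1, c2]
  have e1 : r ^ (α - 1) = r ^ α / r := by
    rw [Real.rpow_sub hr, Real.rpow_one]
  have e2 : r ^ (1 + α) = r * r ^ α := by
    rw [Real.rpow_add hr, Real.rpow_one]
  have e3 : r ^ (2 * α + 2) = r ^ α * r ^ α * (r * r) := by
    rw [show 2 * α + 2 = α + (α + (1 + 1)) by ring, Real.rpow_add hr, Real.rpow_add hr,
      Real.rpow_add hr, Real.rpow_one]
    ring
  have e4 : r ^ (2:ℝ) = r * r := by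
    rw [show (2:ℝ) = 1 + 1 by norm_num, Real.rpow_add hr, Real.rpow_one]
  rw [e1, e2, e3, e4]
  field_simp
  ring

/-- Flux of a rigid field through the power-cup graph `x₃ = h + k|x'|^{1+α}`
over a half-disc; the gradient of the graph function is
`∇g(x') = k (1+α) |x'|^{α-1} x'`. -/
theorem flux_rigid_power_cup
    (α k h ρ γ : ℝ) (uP ω : V3) (hα₀ : 0 < α) (hα₁ : α ≤ 1) (hk : 0 < k) (hρ : 0 < ρ) :
    (∫ y in halfDisc ρ γ,
        ((rigidAt uP ω h (mk3 (y 0) (y 1) (h + k * ‖y‖ ^ (1 + α)))) 2 -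
          (rigidAt uP ω h (mk3 (y 0) (y 1) (h + k * ‖y‖ ^ (1 + α)))) 0 *
            (k * (1 + α) * ‖y‖ ^ (α - 1) * y 0) -
          (rigidAt uP ω h (mk3 (y 0) (y 1) (h + k * ‖y‖ ^ (1 + α)))) 1 *
            (k * (1 + α) * ‖y‖ ^ (α - 1) * y 1))) =
      Real.pi / 2 * ρ ^ 2 * uP 2 +
        2 * k * (1 + α) / (2 + α) * ρ ^ (2 + α) * (uP 0 * Real.sin γ - uP 1 * Real.cos γ) +
        (2 / 3 + 2 * k ^ 2 * (1 + α) / (2 * α + 3) * ρ ^ (2 * α)) * ρ ^ 3 *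
          (ω 0 * Real.cos γ + ω 1 * Real.sin γ) := by
  have hs : MeasurableSet (Ioo (0:ℝ) ρ ×ˢ Ico γ (π + γ)) :=
    measurableSet_Ioo.prod measurableSet_Ico
  set F : E2 → ℝ := fun y =>
    ((rigidAt uP ω h (mk3 (y 0) (y 1) (h + k * ‖y‖ ^ (1 + α)))) 2 -
      (rigidAt uP ω h (mk3 (y 0) (y 1) (h + k * ‖y‖ ^ (1 + α)))) 0 *
        (k * (1 + α) * ‖y‖ ^ (α - 1) * y 0) -
      (rigidAt uP ω h (mk3 (y 0) (y 1) (h + k * ‖y‖ ^ (1 + α)))) 1 *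
        (k * (1 + α) * ‖y‖ ^ (α - 1) * y 1)) with hF
  set G : ℝ × ℝ → ℝ := fun p =>
      (uP 2 * p.1) * 1 +
      (ω 0 * (p.1 ^ (2:ℝ) + k ^ 2 * (1 + α) * p.1 ^ (2 * α + 2))) * Real.sin p.2 -
      (ω 1 * (p.1 ^ (2:ℝ) + k ^ 2 * (1 + α) * p.1 ^ (2 * α + 2))) * Real.cos p.2 -
      (k * (1 + α) * uP 0 * p.1 ^ (1 + α)) * Real.cos p.2 -
      (k * (1 + α) * uP 1 * p.1 ^ (1 + α)) * Real.sin p.2 with hG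
  -- integrability of building blocks
  have hIr : ∀ a : ℝ, -1 < a → IntegrableOn (fun x : ℝ => x ^ a) (Ioo 0 ρ) volume :=
    fun a ha => ((intervalIntegral.intervalIntegrable_rpow' ha).1).mono_set Ioo_subset_Ioc_self
  have hid : IntegrableOn (fun x : ℝ => x) (Ioo 0 ρ) volume :=
    (continuous_id.integrableOn_Icc).mono_set Ioo_subset_Icc_self
  have hgsin : IntegrableOn Real.sin (Ico γ (π + γ)) volume :=
    (continuous_sin.integrableOn_Icc).mono_set Ico_subset_Icc_self
  have hgcos : IntegrableOn Real.cos (Ico γ (π + γ)) volume :=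
    (continuous_cos.integrableOn_Icc).mono_set Ico_subset_Icc_self
  have hgone : IntegrableOn (fun _ : ℝ => (1:ℝ)) (Ico γ (π + γ)) volume :=
    (continuous_const.integrableOn_Icc).mono_set Ico_subset_Icc_self
  have hf1 : Integrable (fun x : ℝ => uP 2 * x) (volume.restrict (Ioo 0 ρ)) := hid.const_mul _
  have hf2 : Integrable (fun x : ℝ => ω 0 * (x ^ (2:ℝ) + k ^ 2 * (1 + α) * x ^ (2 * α + 2)))
      (volume.restrict (Ioo 0 ρ)) :=
    ((hIr 2 (by norm_num)).add ((hIr (2 * α + 2) (by linarith)).const_mul _)).const_mul _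
  have hf3 : Integrable (fun x : ℝ => ω 1 * (x ^ (2:ℝ) + k ^ 2 * (1 + α) * x ^ (2 * α + 2)))
      (volume.restrict (Ioo 0 ρ)) :=
    ((hIr 2 (by norm_num)).add ((hIr (2 * α + 2) (by linarith)).const_mul _)).const_mul _
  have hf4 : Integrable (fun x : ℝ => k * (1 + α) * uP 0 * x ^ (1 + α))
      (volume.restrict (Ioo 0 ρ)) := (hIr (1 + α) (by linarith)).const_mul _
  have hf5 : Integrable (fun x : ℝ => k * (1 + α) * uP 1 * x ^ (1 + α))
      (volume.restrict (Ioo 0 ρ)) := (hIr (1 + α) (by linarith)).const_mul _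
  have hrestr : (volume : Measure (ℝ × ℝ)).restrict (Ioo (0:ℝ) ρ ×ˢ Ico γ (π + γ)) =
      (volume.restrict (Ioo (0:ℝ) ρ)).prod (volume.restrict (Ico γ (π + γ))) := by
    rw [Measure.volume_eq_prod, Measure.prod_restrict]
  have hT1 : Integrable (fun p : ℝ × ℝ => (uP 2 * p.1) * 1)
      ((volume : Measure (ℝ × ℝ)).restrict (Ioo (0:ℝ) ρ ×ˢ Ico γ (π + γ))) := by
    rw [hrestr]; exact hf1.mul_prod hgone
  have hT2 : Integrable
      (fun p : ℝ × ℝ => (ω 0 * (p.1 ^ (2:ℝ) + k ^ 2 * (1 + α) * p.1 ^ (2 * α + 2))) * Real.sin p.2)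
      ((volume : Measure (ℝ × ℝ)).restrict (Ioo (0:ℝ) ρ ×ˢ Ico γ (π + γ))) := by
    rw [hrestr]; exact hf2.mul_prod hgsin
  have hT3 : Integrable
      (fun p : ℝ × ℝ => (ω 1 * (p.1 ^ (2:ℝ) + k ^ 2 * (1 + α) * p.1 ^ (2 * α + 2))) * Real.cos p.2)
      ((volume : Measure (ℝ × ℝ)).restrict (Ioo (0:ℝ) ρ ×ˢ Ico γ (π + γ))) := by
    rw [hrestr]; exact hf3.mul_prod hgcos
  have hT4 : Integrable (fun p : ℝ × ℝ => (k * (1 + α) * uP 0 * p.1 ^ (1 + α)) * Real.cos p.2)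
      ((volume : Measure (ℝ × ℝ)).restrict (Ioo (0:ℝ) ρ ×ˢ Ico γ (π + γ))) := by
    rw [hrestr]; exact hf4.mul_prod hgcos
  have hT5 : Integrable (fun p : ℝ × ℝ => (k * (1 + α) * uP 1 * p.1 ^ (1 + α)) * Real.sin p.2)
      ((volume : Measure (ℝ × ℝ)).restrict (Ioo (0:ℝ) ρ ×ˢ Ico γ (π + γ))) := by
    rw [hrestr]; exact hf5.mul_prod hgsin
  calc
    ∫ y in halfDisc ρ γ, F y
        = ∫ q in polarCoord.symm '' (Ioo (0:ℝ) ρ ×ˢ Ico γ (π + γ)), F (e2equiv q) := by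
          rw [halfDisc_eq]
          exact e2equiv_mp.setIntegral_image_emb e2equiv.measurableEmbedding _ _
    _ = ∫ p in Ioo (0:ℝ) ρ ×ˢ Ico γ (π + γ),
          |(LinearMap.toContinuousLinearMap (Matrix.toLin (Module.Basis.finTwoProd ℝ)
            (Module.Basis.finTwoProd ℝ)
            !![cos p.2, -p.1 * sin p.2; sin p.2, p.1 * cos p.2])).det| •
            F (e2equiv (polarCoord.symm p)) :=
        integral_image_eq_integral_abs_det_fderiv_smul volume hs
          (fun p _ => (hasFDerivAt_polarCoord_symm p).hasFDerivWithinAt)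
          (injon_polar ρ γ) _
    _ = ∫ p in Ioo (0:ℝ) ρ ×ˢ Ico γ (π + γ), G p := by
        apply setIntegral_congr_fun hs
        rintro ⟨r, θ⟩ ⟨⟨hr, -⟩, -⟩
        have hdet : (LinearMap.toContinuousLinearMap (Matrix.toLin (Module.Basis.finTwoProd ℝ)
            (Module.Basis.finTwoProd ℝ)
            !![cos θ, -r * sin θ; sin θ, r * cos θ])).det = r := by
          conv_rhs => rw [← one_mul r, ← cos_sq_add_sin_sq θ]
          simp only [neg_mul, LinearMap.det_toContinuousLinearMap, LinearMap.det_toLin,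
            Matrix.det_fin_two_of, sub_neg_eq_add]
          ring
        simp only [hdet, smul_eq_mul, abs_of_pos hr]
        exact key_pointwise α k h uP ω r θ hr
    _ = (∫ x in Ioo (0:ℝ) ρ, uP 2 * x) * (∫ _ in Ico γ (π + γ), (1:ℝ)) +
        (∫ x in Ioo (0:ℝ) ρ, ω 0 * (x ^ (2:ℝ) + k ^ 2 * (1 + α) * x ^ (2 * α + 2))) *
          (∫ θ in Ico γ (π + γ), Real.sin θ) -
        (∫ x in Ioo (0:ℝ) ρ, ω 1 * (x ^ (2:ℝ) + k ^ 2 * (1 + α) * x ^ (2 * α + 2))) *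
          (∫ θ in Ico γ (π + γ), Real.cos θ) -
        (∫ x in Ioo (0:ℝ) ρ, k * (1 + α) * uP 0 * x ^ (1 + α)) *
          (∫ θ in Ico γ (π + γ), Real.cos θ) -
        (∫ x in Ioo (0:ℝ) ρ, k * (1 + α) * uP 1 * x ^ (1 + α)) *
          (∫ θ in Ico γ (π + γ), Real.sin θ) := by
        simp only [hG]
        have hT12 : Integrable (fun p : ℝ × ℝ => (uP 2 * p.1) * 1 +
            (ω 0 * (p.1 ^ (2:ℝ) + k ^ 2 * (1 + α) * p.1 ^ (2 * α + 2))) * Real.sin p.2)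
            ((volume : Measure (ℝ × ℝ)).restrict (Ioo (0:ℝ) ρ ×ˢ Ico γ (π + γ))) :=
          hT1.add hT2
        have hT123 : Integrable (fun p : ℝ × ℝ => (uP 2 * p.1) * 1 +
            (ω 0 * (p.1 ^ (2:ℝ) + k ^ 2 * (1 + α) * p.1 ^ (2 * α + 2))) * Real.sin p.2 -
            (ω 1 * (p.1 ^ (2:ℝ) + k ^ 2 * (1 + α) * p.1 ^ (2 * α + 2))) * Real.cos p.2)
            ((volume : Measure (ℝ × ℝ)).restrict (Ioo (0:ℝ) ρ ×ˢ Ico γ (π + γ))) :=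
          hT12.sub hT3
        have hT1234 : Integrable (fun p : ℝ × ℝ => (uP 2 * p.1) * 1 +
            (ω 0 * (p.1 ^ (2:ℝ) + k ^ 2 * (1 + α) * p.1 ^ (2 * α + 2))) * Real.sin p.2 -
            (ω 1 * (p.1 ^ (2:ℝ) + k ^ 2 * (1 + α) * p.1 ^ (2 * α + 2))) * Real.cos p.2 -
            (k * (1 + α) * uP 0 * p.1 ^ (1 + α)) * Real.cos p.2)
            ((volume : Measure (ℝ × ℝ)).restrict (Ioo (0:ℝ) ρ ×ˢ Ico γ (π + γ))) :=
          hT123.sub hT4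
        rw [integral_sub hT1234 hT5, integral_sub hT123 hT4, integral_sub hT12 hT3,
          integral_add hT1 hT2]
        rw [Measure.volume_eq_prod]
        rw [setIntegral_prod_mul (fun x : ℝ => uP 2 * x) (fun _ : ℝ => (1:ℝ)),
          setIntegral_prod_mul
            (fun x : ℝ => ω 0 * (x ^ (2:ℝ) + k ^ 2 * (1 + α) * x ^ (2 * α + 2)))
            (fun θ : ℝ => Real.sin θ),
          setIntegral_prod_mul
            (fun x : ℝ => ω 1 * (x ^ (2:ℝ) + k ^ 2 * (1 + α) * x ^ (2 * α + 2)))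
            (fun θ : ℝ => Real.cos θ),
          setIntegral_prod_mul (fun x : ℝ => k * (1 + α) * uP 0 * x ^ (1 + α))
            (fun θ : ℝ => Real.cos θ),
          setIntegral_prod_mul (fun x : ℝ => k * (1 + α) * uP 1 * x ^ (1 + α))
            (fun θ : ℝ => Real.sin θ)]
    _ = Real.pi / 2 * ρ ^ 2 * uP 2 +
        2 * k * (1 + α) / (2 + α) * ρ ^ (2 + α) * (uP 0 * Real.sin γ - uP 1 * Real.cos γ) +
        (2 / 3 + 2 * k ^ 2 * (1 + α) / (2 * α + 3) * ρ ^ (2 * α)) * ρ ^ 3 *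
          (ω 0 * Real.cos γ + ω 1 * Real.sin γ) := by
        have hadd : (∫ x in Ioo (0:ℝ) ρ, (x ^ (2:ℝ) + k ^ 2 * (1 + α) * x ^ (2 * α + 2))) =
            (∫ x in Ioo (0:ℝ) ρ, x ^ (2:ℝ)) +
              (∫ x in Ioo (0:ℝ) ρ, k ^ 2 * (1 + α) * x ^ (2 * α + 2)) :=
          integral_add (hIr 2 (by norm_num)) ((hIr (2 * α + 2) (by linarith)).const_mul _)
        rw [integral_const_mul, integral_const_mul, integral_const_mul, integral_const_mul,
          integral_const_mul, hadd, integral_const_mul, set_int_id ρ hρ, set_int_one,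
          set_int_rpow ρ 2 hρ (by norm_num), set_int_rpow ρ (2 * α + 2) hρ (by linarith),
          set_int_rpow ρ (1 + α) hρ (by linarith), set_int_sin, set_int_cos]
        have E1 : ρ ^ ((2:ℝ) + 1) = ρ ^ (3:ℕ) := by
          rw [show ((2:ℝ) + 1) = ((3:ℕ):ℝ) by norm_num, Real.rpow_natCast]
        have E2 : ρ ^ (2 * α + 2 + 1) = ρ ^ (2 * α) * ρ ^ (3:ℕ) := by
          rw [show 2 * α + 2 + 1 = 2 * α + ((3:ℕ):ℝ) by push_cast; ring,
            Real.rpow_add hρ, Real.rpow_natCast]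
        have E3 : ρ ^ (1 + α + 1) = ρ ^ (2 + α) := by
          rw [show 1 + α + 1 = 2 + α by ring]
        rw [E1, E2, E3]
        have d1 : (2:ℝ) + 1 ≠ 0 := by norm_num
        have d2 : 2 * α + 2 + 1 ≠ 0 := by positivity
        have d3 : 1 + α + 1 ≠ 0 := by positivity
        have d4 : (2:ℝ) + α ≠ 0 := by positivity
        have d5 : 2 * α + 3 ≠ 0 := by positivity
        field_simp
        ring
end
end

section
/- (Near-flatness of the flux of a rigid field through a C³ graph.) Let K ≥ 1 and σ₀ > 0, and let g : ℝ² → ℝ be C³ on the disc {|x'| < σ₀} with |∇^i g(x')| ≤ K|x'|^{2−i} for i = 0,1,2 and |∇³ g(x')| ≤ K on {|x'| < σ₀} (in particular g(0) = 0 and ∇g(0) = 0). Then there exists a constant C(K) > 0 depending only on K such that for every h ∈ ℝ, every u_P = (u_{P1},u_{P2},u_{P3}) ∈ ℝ³, every ω = (ω₁,ω₂,ω₃) ∈ ℝ³ and every ρ ∈ (0, σ₀): the rigid field u(x) := u_P + ω × (x − (0,0,h)) satisfies | ∫_{|x'|<ρ} u(x', h + g(x')) · (−∂_{x₁}g(x'),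 −∂_{x₂}g(x'), 1) dx' − πρ² u_{P3} | ≤ C(K) ( |u_{Pτ}| + |ω_τ| ρ ) ρ⁴, where u_{Pτ} := (u_{P1},u_{P2},0) and ω_τ := (ω₁,ω₂,0). -/
set_option maxHeartbeats 1000000

noncomputable section

open MeasureTheory Real Set Filter
open scoped RealInnerProductSpace

namespace FluxAux

lemma mk2_apply_zero (a b : ℝ) : (mk2 a b) 0 = a := rfl
lemma mk2_apply_one (a b : ℝ) : (mk2 a b) 1 = b := rfl

lemma e2_ext {x y : E2} (h0 : x 0 = y 0) (h1 : x 1 = y 1) : x = y := by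
  ext i; fin_cases i <;> assumption

lemma e2_norm (x : E2) : ‖x‖ = Real.sqrt ((x 0)^2 + (x 1)^2) := by
  rw [EuclideanSpace.norm_eq]
  simp [Fin.sum_univ_two, sq_abs]

lemma decomp (y : E2) : y = y 0 • (EuclideanSpace.single (0:Fin 2) (1:ℝ)) +
    y 1 • (EuclideanSpace.single (1:Fin 2) (1:ℝ)) := by
  apply e2_ext <;> simp

lemma mk2_eq (a b : ℝ) : mk2 a b = a • (EuclideanSpace.single (0:Fin 2) (1:ℝ)) +
    b • (EuclideanSpace.single (1:Fin 2) (1:ℝ)) := by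
  apply e2_ext <;> simp [mk2_apply_zero, mk2_apply_one]

/-- rotation by angle θ as a linear map -/
def rotL (θ : ℝ) : E2 →ₗ[ℝ] E2 where
  toFun y := mk2 (Real.cos θ * y 0 - Real.sin θ * y 1) (Real.sin θ * y 0 + Real.cos θ * y 1)
  map_add' x y := by apply e2_ext <;> simp [mk2_apply_zero, mk2_apply_one] <;> ring
  map_smul' c y := by apply e2_ext <;> simp [mk2_apply_zero, mk2_apply_one] <;> ring

lemma rotL_apply_zero (θ : ℝ) (y : E2) :
    (rotL θ y) 0 = Real.cos θ * y 0 - Real.sin θ * y 1 := rfl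
lemma rotL_apply_one (θ : ℝ) (y : E2) :
    (rotL θ y) 1 = Real.sin θ * y 0 + Real.cos θ * y 1 := rfl

lemma rotL_comp (θ : ℝ) (y : E2) : rotL (-θ) (rotL θ y) = y := by
  have h := Real.sin_sq_add_cos_sq θ
  apply e2_ext <;>
    simp only [rotL_apply_zero, rotL_apply_one, Real.cos_neg, Real.sin_neg] <;>
    first
      | linear_combination (y 0 : ℝ) * h
      | linear_combination (y 1 : ℝ) * h

/-- rotation by angle θ as a linear isometry equivalence -/
def rot (θ : ℝ) : E2 ≃ₗᵢ[ℝ] E2 :=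
  { (LinearEquiv.ofLinear (rotL θ) (rotL (-θ))
      (LinearMap.ext fun y => by simpa using rotL_comp (-θ) y)
      (LinearMap.ext fun y => rotL_comp θ y) : E2 ≃ₗ[ℝ] E2) with
    norm_map' := by
      intro y
      have h := Real.sin_sq_add_cos_sq θ
      show ‖rotL θ y‖ = ‖y‖
      rw [e2_norm, e2_norm, rotL_apply_zero, rotL_apply_one]
      congr 1
      nlinarith [h] }

lemma rot_apply (θ : ℝ) (y : E2) :
    rot θ y = mk2 (Real.cos θ * y 0 - Real.sin θ * y 1)
      (Real.sin θ * y 0 + Real.cos θ * y 1) := rfl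

lemma rot_zero_apply (y : E2) : rot 0 y = y := by
  apply e2_ext <;> simp [rot_apply, mk2_apply_zero, mk2_apply_one]

lemma setIntegral_ball_comp_lie (T : E2 ≃ₗᵢ[ℝ] E2) (f : E2 → ℝ) (r : ℝ) :
    ∫ y in Metric.ball (0:E2) r, f (T y) = ∫ y in Metric.ball (0:E2) r, f y := by
  have h1 : T ⁻¹' (Metric.ball 0 r) = Metric.ball 0 r := by
    ext y
    simp [Metric.mem_ball, dist_zero_right, T.norm_map]
  calc ∫ y in Metric.ball (0:E2) r, f (T y)
      = ∫ y in T ⁻¹' (Metric.ball 0 r), f (T y) := by rw [h1]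
    _ = ∫ y in Metric.ball (0:E2) r, f y :=
        (T.measurePreserving).setIntegral_preimage_emb
          T.toHomeomorph.measurableEmbedding f _

lemma integral_ball_coord (r : ℝ) (i : Fin 2) :
    ∫ y in Metric.ball (0:E2) r, y i = 0 := by
  have h := setIntegral_ball_comp_lie (LinearIsometryEquiv.neg ℝ) (fun y => y i) r
  simp only [LinearIsometryEquiv.coe_neg] at h
  have h2 : ∫ y in Metric.ball (0:E2) r, (-y) i = ∫ y in Metric.ball (0:E2) r, -(y i) := rfl
  rw [h2, integral_neg] at h
  linarith

lemma vol_ball (r : ℝ) (hr : 0 ≤ r) :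
    (volume (Metric.ball (0:E2) r)).toReal = Real.pi * r ^ 2 := by
  rw [EuclideanSpace.volume_ball]
  have hc : (Fintype.card (Fin 2)) = 2 := by simp
  rw [hc]
  have h2 : ((2:ℕ) : ℝ) / 2 + 1 = 2 := by norm_num
  rw [h2, Real.Gamma_two]
  rw [ENNReal.toReal_mul, ENNReal.toReal_pow, ENNReal.toReal_ofReal hr,
    ENNReal.toReal_ofReal (by positivity)]
  rw [Real.sq_sqrt Real.pi_nonneg]
  ring

lemma integrableOn_ball_of_continuousOn {f : E2 → ℝ} {r σ : ℝ} (hr : r < σ)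
    (hf : ContinuousOn f (Metric.ball 0 σ)) : IntegrableOn f (Metric.ball (0:E2) r) := by
  have h1 : IntegrableOn f (Metric.closedBall (0:E2) r) :=
    (hf.mono (Metric.closedBall_subset_ball hr)).integrableOn_compact
      (isCompact_closedBall _ _)
  exact h1.mono_set Metric.ball_subset_closedBall

lemma curryLeft_norm_le {n : ℕ} (A : ContinuousMultilinearMap ℝ (fun _ : Fin (n+1) => E2) ℝ) :
    ‖A.curryLeft‖ ≤ ‖A‖ := by
  refine ContinuousLinearMap.opNorm_le_bound _ (norm_nonneg A) (fun v => ?_)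
  refine ContinuousMultilinearMap.opNorm_le_bound (by positivity) (fun m => ?_)
  rw [ContinuousMultilinearMap.curryLeft_apply]
  refine le_trans (A.le_opNorm (Fin.cons v m)) ?_
  rw [Fin.prod_univ_succ]
  simp only [Fin.cons_zero, Fin.cons_succ]
  exact le_of_eq (by ring)

lemma taylor_bound (K σ₀ ρ : ℝ) (g : E2 → ℝ) (hK : 0 ≤ K) (hσ : 0 < σ₀) (hρ0 : 0 < ρ)
    (hρσ : ρ < σ₀)
    (hg : ContDiffOn ℝ 3 g (Metric.ball 0 σ₀))
    (h1 : ∀ y ∈ Metric.ball (0:E2) σ₀, ‖fderivWithin ℝ g (Metric.ball 0 σ₀) y‖ ≤ K * ‖y‖)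
    (h3 : ∀ y ∈ Metric.ball (0:E2) σ₀, ‖iteratedFDerivWithin ℝ 3 g (Metric.ball 0 σ₀) y‖ ≤ K)
    (e : E2) (he : ‖e‖ = 1) :
    |∫ y in Metric.ball (0:E2) ρ, fderivWithin ℝ g (Metric.ball 0 σ₀) y e| ≤
      K * ρ ^ 2 * (Real.pi * ρ ^ 2) := by
  set B := Metric.ball (0:E2) σ₀ with hBdef
  set S := Metric.ball (0:E2) ρ with hSdef
  have hBu : UniqueDiffOn ℝ B := Metric.isOpen_ball.uniqueDiffOn
  have h0B : (0:E2) ∈ B := Metric.mem_ball_self hσ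
  have h0S : (0:E2) ∈ S := Metric.mem_ball_self hρ0
  have hSB : S ⊆ B := Metric.ball_subset_ball hρσ.le
  set p := ftaylorSeriesWithin ℝ g B with hp
  have hT : HasFTaylorSeriesUpToOn 3 g p B := hg.ftaylorSeriesWithin hBu
  have hd1 : ∀ x ∈ B, HasFDerivWithinAt (fun y => p y 1) (p x 2).curryLeft B x :=
    fun x hx => hT.fderivWithin 1 (by norm_num) x hx
  have hd2 : ∀ x ∈ B, HasFDerivWithinAt (fun y => p y 2) (p x 3).curryLeft B x :=
    fun x hx => hT.fderivWithin 2 (by norm_num) x hx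
  have hP2 : ∀ x ∈ B, ‖p x 2 - p 0 2‖ ≤ K * ‖x‖ := by
    intro x hx
    have h := Convex.norm_image_sub_le_of_norm_hasFDerivWithin_le hd2
      (fun z hz => le_trans (curryLeft_norm_le (p z 3)) (h3 z hz)) (convex_ball _ _) h0B hx
    simpa using h
  set L : E2 →L[ℝ] (ContinuousMultilinearMap ℝ (fun _ : Fin 1 => E2) ℝ) :=
    (p 0 2).curryLeft with hL
  have hψd : ∀ x ∈ S, HasFDerivWithinAt (fun y => p y 1 - L y) ((p x 2).curryLeft - L) S x :=
    fun x hx => ((hd1 x (hSB hx)).mono hSB).sub L.hasFDerivWithinAt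
  have hψbound : ∀ x ∈ S, ‖(p x 2).curryLeft - L‖ ≤ K * ρ := by
    intro x hx
    have hxB := hSB hx
    have heq : (p x 2).curryLeft - L = (p x 2 - p 0 2).curryLeft := by
      ext v m
      simp [hL, ContinuousMultilinearMap.curryLeft_apply, ContinuousMultilinearMap.sub_apply,
        ContinuousLinearMap.sub_apply]
    rw [heq]
    refine (curryLeft_norm_le _).trans ((hP2 x hxB).trans ?_)
    have hx' : ‖x‖ ≤ ρ := le_of_lt (by simpa [hSdef, Metric.mem_ball, dist_zero_right] using hx)
    exact mul_le_mul_of_nonneg_left hx' hK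
  have hf0 : fderivWithin ℝ g B 0 = 0 := by
    have h := h1 0 h0B
    simp only [norm_zero, mul_zero] at h
    exact norm_le_zero_iff.mp h
  have hp10 : p 0 1 = 0 := by
    ext m
    have : p 0 1 = iteratedFDerivWithin ℝ 1 g B 0 := rfl
    rw [this, iteratedFDerivWithin_one_apply (hBu 0 h0B)]
    simp [hf0]
  have hψ : ∀ y ∈ S, ‖p y 1 - L y‖ ≤ K * ρ * ‖y‖ := by
    intro y hy
    have h := Convex.norm_image_sub_le_of_norm_hasFDerivWithin_le hψd hψbound
      (convex_ball _ _) h0S hy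
    simpa [hp10] using h
  set c0 : ℝ := (L (EuclideanSpace.single 0 1)) ![e] with hc0
  set c1 : ℝ := (L (EuclideanSpace.single 1 1)) ![e] with hc1
  have hLy : ∀ y : E2, (L y) ![e] = y 0 * c0 + y 1 * c1 := by
    intro y
    conv_lhs => rw [decomp y]
    rw [map_add, ContinuousLinearMap.map_smul, ContinuousLinearMap.map_smul]
    simp only [ContinuousMultilinearMap.add_apply, ContinuousMultilinearMap.smul_apply,
      smul_eq_mul, hc0, hc1]
  have key : ∀ y ∈ S, fderivWithin ℝ g B y e =
      (y 0 * c0 + y 1 * c1) + (p y 1 - L y) ![e] := by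
    intro y hy
    have h1' : (p y 1) ![e] = fderivWithin ℝ g B y e := by
      have : p y 1 = iteratedFDerivWithin ℝ 1 g B y := rfl
      rw [this, iteratedFDerivWithin_one_apply (hBu y (hSB hy))]
      rfl
    rw [← hLy, ContinuousMultilinearMap.sub_apply, h1']
    ring
  have hcont1 : ContinuousOn (fun y => fderivWithin ℝ g B y e) B :=
    (hg.continuousOn_fderivWithin hBu (by norm_num)).clm_apply continuousOn_const
  have hint1 : IntegrableOn (fun y => fderivWithin ℝ g B y e) S :=
    integrableOn_ball_of_continuousOn hρσ hcont1
  have hcontlin : ContinuousOn (fun y : E2 => y 0 * c0 + y 1 * c1) B := by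
    apply ContinuousOn.add <;> apply ContinuousOn.mul _ continuousOn_const
    · exact ((EuclideanSpace.proj (0 : Fin 2) : E2 →L[ℝ] ℝ).continuous).continuousOn
    · exact ((EuclideanSpace.proj (1 : Fin 2) : E2 →L[ℝ] ℝ).continuous).continuousOn
  have hintlin : IntegrableOn (fun y : E2 => y 0 * c0 + y 1 * c1) S :=
    integrableOn_ball_of_continuousOn hρσ hcontlin
  have hintψ : IntegrableOn (fun y => (p y 1 - L y) ![e]) S := by
    have hsub : IntegrableOn
        (fun y => fderivWithin ℝ g B y e - (y 0 * c0 + y 1 * c1)) S := hint1.sub hintlin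
    refine hsub.congr_fun (fun y hy => ?_) measurableSet_ball
    have := key y hy
    simp only []
    linarith [this]
  have hsplit : ∫ y in S, fderivWithin ℝ g B y e =
      (∫ y in S, (y 0 * c0 + y 1 * c1)) + ∫ y in S, (p y 1 - L y) ![e] := by
    rw [← integral_add hintlin hintψ]
    exact setIntegral_congr_fun measurableSet_ball key
  have hzero : ∫ y in S, (y 0 * c0 + y 1 * c1) = 0 := by
    have i0 : IntegrableOn (fun y : E2 => y 0 * c0) S :=
      integrableOn_ball_of_continuousOn hρσ (by
        exact (((EuclideanSpace.proj (0 : Fin 2) : E2 →L[ℝ] ℝ).continuous).continuousOn).mul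
          continuousOn_const)
    have i1 : IntegrableOn (fun y : E2 => y 1 * c1) S :=
      integrableOn_ball_of_continuousOn hρσ (by
        exact (((EuclideanSpace.proj (1 : Fin 2) : E2 →L[ℝ] ℝ).continuous).continuousOn).mul
          continuousOn_const)
    rw [integral_add i0 i1, integral_mul_const, integral_mul_const,
      integral_ball_coord, integral_ball_coord]
    ring
  have hbd : ∀ y ∈ S, ‖(p y 1 - L y) ![e]‖ ≤ K * ρ * ρ := by
    intro y hy
    calc ‖(p y 1 - L y) ![e]‖ ≤ ‖p y 1 - L y‖ * ∏ i : Fin 1, ‖(![e] : Fin 1 → E2) i‖ :=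
          (p y 1 - L y).le_opNorm _
      _ = ‖p y 1 - L y‖ := by simp [he]
      _ ≤ K * ρ * ‖y‖ := hψ y hy
      _ ≤ K * ρ * ρ := by
          have hy' : ‖y‖ ≤ ρ := le_of_lt (by simpa [hSdef, Metric.mem_ball, dist_zero_right] using hy)
          have : 0 ≤ K * ρ := by positivity
          exact mul_le_mul_of_nonneg_left hy' this
  have hmeas : AEStronglyMeasurable (fun y => (p y 1 - L y) ![e]) (volume.restrict S) :=
    hintψ.aestronglyMeasurable
  have hb := norm_setIntegral_le_of_norm_le_const (measure_ball_lt_top (μ := volume)) hbd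
  rw [hsplit, hzero, zero_add]
  calc |∫ y in S, (p y 1 - L y) ![e]| ≤ (K * ρ * ρ) * (volume S).toReal := hb
    _ = K * ρ ^ 2 * (Real.pi * ρ ^ 2) := by
        rw [hSdef, vol_ball ρ hρ0.le]; ring

lemma rot_integral_zero (K σ₀ ρ : ℝ) (g : E2 → ℝ) (hK : 0 ≤ K) (hσ : 0 < σ₀) (hρ0 : 0 < ρ)
    (hρσ : ρ < σ₀)
    (hg : ContDiffOn ℝ 3 g (Metric.ball 0 σ₀))
    (h1 : ∀ y ∈ Metric.ball (0:E2) σ₀, ‖fderivWithin ℝ g (Metric.ball 0 σ₀) y‖ ≤ K * ‖y‖) :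
    ∫ y in Metric.ball (0:E2) ρ,
      (y 1 * fderivWithin ℝ g (Metric.ball 0 σ₀) y (EuclideanSpace.single 0 1)
        - y 0 * fderivWithin ℝ g (Metric.ball 0 σ₀) y (EuclideanSpace.single 1 1)) = 0 := by
  set B := Metric.ball (0:E2) σ₀ with hBdef
  set S := Metric.ball (0:E2) ρ with hSdef
  have hBu : UniqueDiffOn ℝ B := Metric.isOpen_ball.uniqueDiffOn
  have hSB : S ⊆ B := Metric.ball_subset_ball hρσ.le
  have hmemS : ∀ (θ : ℝ) (y : E2), y ∈ S → rot θ y ∈ S := by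
    intro θ y hy
    simp only [hSdef, Metric.mem_ball, dist_zero_right] at hy ⊢
    rwa [(rot θ).norm_map]
  have hmemB : ∀ (θ : ℝ) (y : E2), y ∈ B → rot θ y ∈ B := by
    intro θ y hy
    simp only [hBdef, Metric.mem_ball, dist_zero_right] at hy ⊢
    rwa [(rot θ).norm_map]
  have hfeq : ∀ x ∈ B, fderivWithin ℝ g B x = fderiv ℝ g x := fun x hx =>
    fderivWithin_of_isOpen Metric.isOpen_ball hx
  have hgd : ∀ x ∈ B, HasFDerivAt g (fderiv ℝ g x) x := by
    intro x hx
    exact ((hg.contDiffAt (Metric.isOpen_ball.mem_nhds hx)).differentiableAt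
      (by norm_num)).hasFDerivAt
  set γ' : ℝ → E2 → E2 := fun θ y =>
    mk2 (-Real.sin θ * y 0 - Real.cos θ * y 1) (Real.cos θ * y 0 - Real.sin θ * y 1) with hγ'
  have hγ : ∀ (θ : ℝ) (y : E2), HasDerivAt (fun t => rot t y) (γ' θ y) θ := by
    intro θ y
    have hfun : (fun t => rot t y) = fun t =>
        (Real.cos t * y 0 - Real.sin t * y 1) • (EuclideanSpace.single (0:Fin 2) (1:ℝ)) +
        (Real.sin t * y 0 + Real.cos t * y 1) • (EuclideanSpace.single (1:Fin 2) (1:ℝ)) :=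
      funext fun t => by rw [rot_apply, mk2_eq]
    rw [hfun]
    simp only [hγ']
    rw [mk2_eq]
    have h0 : HasDerivAt (fun t => Real.cos t * y 0 - Real.sin t * y 1)
        (-Real.sin θ * y 0 - Real.cos θ * y 1) θ := by
      have := ((Real.hasDerivAt_cos θ).mul_const (y 0)).sub
        ((Real.hasDerivAt_sin θ).mul_const (y 1))
      exact this
    have h1' : HasDerivAt (fun t => Real.sin t * y 0 + Real.cos t * y 1)
        (Real.cos θ * y 0 - Real.sin θ * y 1) θ := by
      have := ((Real.hasDerivAt_sin θ).mul_const (y 0)).add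
        ((Real.hasDerivAt_cos θ).mul_const (y 1))
      exact this.congr_deriv (by ring)
    exact (h0.smul_const _).add (h1'.smul_const _)
  have hγ'norm : ∀ (θ : ℝ) (y : E2), ‖γ' θ y‖ = ‖y‖ := by
    intro θ y
    rw [hγ', e2_norm, e2_norm y]
    simp only [mk2_apply_zero, mk2_apply_one]
    congr 1
    linear_combination ((y 0)^2 + (y 1)^2) * (Real.sin_sq_add_cos_sq θ)
  set F : ℝ → E2 → ℝ := fun θ y => g (rot θ y) with hF
  set F' : ℝ → E2 → ℝ := fun θ y => fderiv ℝ g (rot θ y) (γ' θ y) with hF'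
  have hγ'cont : ∀ θ : ℝ, Continuous (fun y : E2 => γ' θ y) := by
    intro θ
    have c0 : Continuous fun y : E2 => y 0 := (EuclideanSpace.proj (0:Fin 2) : E2 →L[ℝ] ℝ).continuous
    have c1 : Continuous fun y : E2 => y 1 := (EuclideanSpace.proj (1:Fin 2) : E2 →L[ℝ] ℝ).continuous
    have : (fun y : E2 => γ' θ y) = fun y : E2 =>
        (-Real.sin θ * y 0 - Real.cos θ * y 1) • (EuclideanSpace.single (0:Fin 2) (1:ℝ)) +
        (Real.cos θ * y 0 - Real.sin θ * y 1) • (EuclideanSpace.single (1:Fin 2) (1:ℝ)) :=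
      funext fun y => by simp only [hγ']; rw [mk2_eq]
    rw [this]
    exact ((((continuous_const.mul c0)).sub ((continuous_const.mul c1))).smul continuous_const).add
      ((((continuous_const.mul c0)).sub ((continuous_const.mul c1))).smul continuous_const)
  have hfc : ContinuousOn (fderiv ℝ g) B :=
    (hg.continuousOn_fderivWithin hBu (by norm_num)).congr fun x hx => (hfeq x hx).symm
  have hmeasF : ∀ θ : ℝ, AEStronglyMeasurable (F θ) (volume.restrict S) := by
    intro θ
    exact ((hg.continuousOn.comp (rot θ).continuous.continuousOn
      (fun y hy => hSB (hmemS θ y hy))) : ContinuousOn (F θ) S).aestronglyMeasurable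
      measurableSet_ball
  have hintF0 : Integrable (F 0) (volume.restrict S) := by
    refine integrableOn_ball_of_continuousOn hρσ ?_
    exact hg.continuousOn.comp (rot 0).continuous.continuousOn (fun y hy => hmemB 0 y hy)
  have hmeasF'0 : AEStronglyMeasurable (F' 0) (volume.restrict S) := by
    have : ContinuousOn (F' 0) S := by
      refine ContinuousOn.clm_apply ?_ ((hγ'cont 0).continuousOn)
      exact hfc.comp (rot 0).continuous.continuousOn (fun y hy => hSB (hmemS 0 y hy))
    exact this.aestronglyMeasurable measurableSet_ball
  have hbound : ∀ᵐ y ∂(volume.restrict S), ∀ θ ∈ Metric.ball (0:ℝ) 1,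
      ‖F' θ y‖ ≤ K * ρ * ρ := by
    filter_upwards [ae_restrict_mem (measurableSet_ball : MeasurableSet S)] with y hy θ _
    have hyS := hmemS θ y hy
    have hyB := hSB hyS
    have hn : ‖rot θ y‖ < ρ := by
      simpa [hSdef, Metric.mem_ball, dist_zero_right] using hyS
    have hyn : ‖y‖ ≤ ρ := le_of_lt (by simpa [hSdef, Metric.mem_ball, dist_zero_right] using hy)
    calc ‖F' θ y‖ ≤ ‖fderiv ℝ g (rot θ y)‖ * ‖γ' θ y‖ :=
          (fderiv ℝ g (rot θ y)).le_opNorm _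
      _ ≤ (K * ρ) * ρ := by
          refine mul_le_mul ?_ ?_ (norm_nonneg _) (by positivity)
          · rw [← hfeq _ hyB]
            refine (h1 _ hyB).trans ?_
            exact mul_le_mul_of_nonneg_left ((rot θ).norm_map y ▸ hn.le) hK
          · rw [hγ'norm]; exact hyn
      _ = K * ρ * ρ := by ring
  have hbint : Integrable (fun _ : E2 => K * ρ * ρ) (volume.restrict S) :=
    integrableOn_const measure_ball_lt_top.ne
  have hdiff : ∀ᵐ y ∂(volume.restrict S), ∀ θ ∈ Metric.ball (0:ℝ) 1,
      HasDerivAt (fun t => F t y) (F' θ y) θ := by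
    filter_upwards [ae_restrict_mem (measurableSet_ball : MeasurableSet S)] with y hy θ _
    exact (hgd _ (hSB (hmemS θ y hy))).comp_hasDerivAt θ (hγ θ y)
  obtain ⟨-, hD⟩ := hasDerivAt_integral_of_dominated_loc_of_deriv_le (Metric.ball_mem_nhds 0 one_pos)
    (Filter.Eventually.of_forall hmeasF) hintF0 hmeasF'0 hbound hbint hdiff
  have hconst : (fun θ : ℝ => ∫ y in S, F θ y) = fun _ => ∫ y in S, g y :=
    funext fun θ => setIntegral_ball_comp_lie (rot θ) g ρ
  rw [hconst] at hD
  have hz : ∫ y in S, F' 0 y = 0 := hD.unique (hasDerivAt_const 0 _)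
  have hptw : ∀ y ∈ S, (y 1 * fderivWithin ℝ g B y (EuclideanSpace.single 0 1)
      - y 0 * fderivWithin ℝ g B y (EuclideanSpace.single 1 1)) = -(F' 0 y) := by
    intro y hy
    have hyB := hSB hy
    rw [hF']
    simp only [rot_zero_apply]
    have : γ' 0 y = mk2 (-(y 1)) (y 0) := by
      rw [hγ']
      apply e2_ext <;> simp [mk2_apply_zero, mk2_apply_one]
    rw [this, mk2_eq, map_add, (fderiv ℝ g y).map_smul, (fderiv ℝ g y).map_smul,
      ← hfeq _ hyB]
    simp only [smul_eq_mul]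
    ring
  calc ∫ y in S, (y 1 * fderivWithin ℝ g B y (EuclideanSpace.single 0 1)
        - y 0 * fderivWithin ℝ g B y (EuclideanSpace.single 1 1))
      = ∫ y in S, -(F' 0 y) := setIntegral_congr_fun measurableSet_ball hptw
    _ = -∫ y in S, F' 0 y := integral_neg _
    _ = 0 := by rw [hz, neg_zero]

lemma abs_apply0_le_pnorm (x : V3) : |x 0| ≤ pnorm x := by
  rw [← Real.sqrt_sq_eq_abs]
  exact Real.sqrt_le_sqrt (by nlinarith [sq_nonneg (x 1)])

lemma abs_apply1_le_pnorm (x : V3) : |x 1| ≤ pnorm x := by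
  rw [← Real.sqrt_sq_eq_abs]
  exact Real.sqrt_le_sqrt (by nlinarith [sq_nonneg (x 0)])

lemma pnorm_nonneg (x : V3) : 0 ≤ pnorm x := Real.sqrt_nonneg _

end FluxAux

/-- Near-flatness of the flux of a rigid field through a `C³` graph. -/
theorem flux_rigid_C3_graph_near_flat
    (K : ℝ) (hK : 1 ≤ K) :
    ∃ C : ℝ, 0 < C ∧
      ∀ (σ₀ : ℝ) (g : E2 → ℝ), 0 < σ₀ →
        ContDiffOn ℝ 3 g (Metric.ball 0 σ₀) →
        (∀ y ∈ Metric.ball (0 : E2) σ₀, |g y| ≤ K * ‖y‖ ^ 2) →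
        (∀ y ∈ Metric.ball (0 : E2) σ₀,
          ‖fderivWithin ℝ g (Metric.ball 0 σ₀) y‖ ≤ K * ‖y‖) →
        (∀ y ∈ Metric.ball (0 : E2) σ₀,
          ‖iteratedFDerivWithin ℝ 2 g (Metric.ball 0 σ₀) y‖ ≤ K) →
        (∀ y ∈ Metric.ball (0 : E2) σ₀,
          ‖iteratedFDerivWithin ℝ 3 g (Metric.ball 0 σ₀) y‖ ≤ K) →
        ∀ (h : ℝ) (uP ω : V3) (ρ : ℝ), 0 < ρ → ρ < σ₀ →
          |(∫ y in Metric.ball (0 : E2) ρ,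
              ((rigidAt uP ω h (mk3 (y 0) (y 1) (h + g y))) 2 -
                (rigidAt uP ω h (mk3 (y 0) (y 1) (h + g y))) 0 *
                  fderivWithin ℝ g (Metric.ball 0 σ₀) y (EuclideanSpace.single 0 1) -
                (rigidAt uP ω h (mk3 (y 0) (y 1) (h + g y))) 1 *
                  fderivWithin ℝ g (Metric.ball 0 σ₀) y (EuclideanSpace.single 1 1))) -
            Real.pi * ρ ^ 2 * uP 2| ≤
            C * (pnorm uP + pnorm ω * ρ) * ρ ^ 4 := by
  classical
  have hK0 : (0:ℝ) ≤ K := le_trans zero_le_one hK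
  refine ⟨7 * K ^ 2, by positivity, ?_⟩
  intro σ₀ g hσ hg hgb0 hgb1 hgb2 hgb3 h uP ω ρ hρ0 hρσ
  set B := Metric.ball (0:E2) σ₀ with hB
  set S := Metric.ball (0:E2) ρ with hS
  have hSB : S ⊆ B := Metric.ball_subset_ball hρσ.le
  have hBu : UniqueDiffOn ℝ B := Metric.isOpen_ball.uniqueDiffOn
  have hyρ : ∀ y ∈ S, ‖y‖ ≤ ρ := fun y hy =>
    le_of_lt (by simpa [hS, Metric.mem_ball, dist_zero_right] using hy)
  have he0 : ‖(EuclideanSpace.single (0:Fin 2) (1:ℝ))‖ = 1 := by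
    simp [EuclideanSpace.norm_single]
  have he1 : ‖(EuclideanSpace.single (1:Fin 2) (1:ℝ))‖ = 1 := by
    simp [EuclideanSpace.norm_single]
  -- pointwise bounds
  have hgb : ∀ y ∈ S, |g y| ≤ K * ρ ^ 2 := by
    intro y hy
    refine (hgb0 y (hSB hy)).trans ?_
    have h1 := hyρ y hy
    have h2 : ‖y‖ ^ 2 ≤ ρ ^ 2 := by nlinarith [norm_nonneg y]
    exact mul_le_mul_of_nonneg_left h2 hK0
  have hDb : ∀ (e : E2), ‖e‖ = 1 → ∀ y ∈ S, |fderivWithin ℝ g B y e| ≤ K * ρ := by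
    intro e he y hy
    calc |fderivWithin ℝ g B y e| ≤ ‖fderivWithin ℝ g B y‖ * ‖e‖ :=
          (fderivWithin ℝ g B y).le_opNorm e
      _ = ‖fderivWithin ℝ g B y‖ := by rw [he, mul_one]
      _ ≤ K * ‖y‖ := hgb1 y (hSB hy)
      _ ≤ K * ρ := mul_le_mul_of_nonneg_left (hyρ y hy) hK0
  -- continuity
  have hcD : ContinuousOn (fderivWithin ℝ g B) B :=
    hg.continuousOn_fderivWithin hBu (by norm_num)
  have hcg0 : ContinuousOn (fun y => fderivWithin ℝ g B y (EuclideanSpace.single 0 1)) B :=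
    hcD.clm_apply continuousOn_const
  have hcg1 : ContinuousOn (fun y => fderivWithin ℝ g B y (EuclideanSpace.single 1 1)) B :=
    hcD.clm_apply continuousOn_const
  have hcg : ContinuousOn g B := hg.continuousOn
  have c0 : Continuous fun y : E2 => y 0 :=
    (EuclideanSpace.proj (0:Fin 2) : E2 →L[ℝ] ℝ).continuous
  have c1 : Continuous fun y : E2 => y 1 :=
    (EuclideanSpace.proj (1:Fin 2) : E2 →L[ℝ] ℝ).continuous
  -- integrability of the seven pieces
  have i1 : IntegrableOn (fun y : E2 => ω 0 * y 1) S :=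
    FluxAux.integrableOn_ball_of_continuousOn hρσ (continuousOn_const.mul c1.continuousOn)
  have i2 : IntegrableOn (fun y : E2 => -(ω 1) * y 0) S :=
    FluxAux.integrableOn_ball_of_continuousOn hρσ (continuousOn_const.mul c0.continuousOn)
  have i3 : IntegrableOn (fun y : E2 =>
      -(uP 0) * fderivWithin ℝ g B y (EuclideanSpace.single 0 1)) S :=
    FluxAux.integrableOn_ball_of_continuousOn hρσ (continuousOn_const.mul hcg0)
  have i4 : IntegrableOn (fun y : E2 =>
      -(uP 1) * fderivWithin ℝ g B y (EuclideanSpace.single 1 1)) S :=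
    FluxAux.integrableOn_ball_of_continuousOn hρσ (continuousOn_const.mul hcg1)
  have i5 : IntegrableOn (fun y : E2 =>
      -(ω 1) * (g y * fderivWithin ℝ g B y (EuclideanSpace.single 0 1))) S :=
    FluxAux.integrableOn_ball_of_continuousOn hρσ (continuousOn_const.mul (hcg.mul hcg0))
  have i6 : IntegrableOn (fun y : E2 =>
      ω 0 * (g y * fderivWithin ℝ g B y (EuclideanSpace.single 1 1))) S :=
    FluxAux.integrableOn_ball_of_continuousOn hρσ (continuousOn_const.mul (hcg.mul hcg1))
  have i7 : IntegrableOn (fun y : E2 =>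
      ω 2 * (y 1 * fderivWithin ℝ g B y (EuclideanSpace.single 0 1)
        - y 0 * fderivWithin ℝ g B y (EuclideanSpace.single 1 1))) S :=
    FluxAux.integrableOn_ball_of_continuousOn hρσ (continuousOn_const.mul
      ((c1.continuousOn.mul hcg0).sub (c0.continuousOn.mul hcg1)))
  have iconst : IntegrableOn (fun _ : E2 => uP 2) S :=
    integrableOn_const measure_ball_lt_top.ne
  -- pointwise identity for the integrand
  have hpt : ∀ y ∈ S,
      ((rigidAt uP ω h (mk3 (y 0) (y 1) (h + g y))) 2 -
        (rigidAt uP ω h (mk3 (y 0) (y 1) (h + g y))) 0 *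
          fderivWithin ℝ g B y (EuclideanSpace.single 0 1) -
        (rigidAt uP ω h (mk3 (y 0) (y 1) (h + g y))) 1 *
          fderivWithin ℝ g B y (EuclideanSpace.single 1 1)) =
      uP 2 + (ω 0 * y 1 + -(ω 1) * y 0 +
        -(uP 0) * fderivWithin ℝ g B y (EuclideanSpace.single 0 1) +
        -(uP 1) * fderivWithin ℝ g B y (EuclideanSpace.single 1 1) +
        -(ω 1) * (g y * fderivWithin ℝ g B y (EuclideanSpace.single 0 1)) +
        ω 0 * (g y * fderivWithin ℝ g B y (EuclideanSpace.single 1 1)) +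
        ω 2 * (y 1 * fderivWithin ℝ g B y (EuclideanSpace.single 0 1)
          - y 0 * fderivWithin ℝ g B y (EuclideanSpace.single 1 1))) := by
    intro y _
    have e2 : (rigidAt uP ω h (mk3 (y 0) (y 1) (h + g y))) 2 =
        uP 2 + (ω 0 * y 1 - ω 1 * y 0) := by
      show uP 2 + (ω 0 * (y 1 - 0) - ω 1 * (y 0 - 0)) = _
      ring
    have e0 : (rigidAt uP ω h (mk3 (y 0) (y 1) (h + g y))) 0 =
        uP 0 + (ω 1 * g y - ω 2 * y 1) := by
      show uP 0 + (ω 1 * ((h + g y) - h) - ω 2 * (y 1 - 0)) = _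
      ring
    have e1 : (rigidAt uP ω h (mk3 (y 0) (y 1) (h + g y))) 1 =
        uP 1 + (ω 2 * y 0 - ω 0 * g y) := by
      show uP 1 + (ω 2 * (y 0 - 0) - ω 0 * ((h + g y) - h)) = _
      ring
    rw [e2, e0, e1]
    ring
  -- split the integral
  have hvol : (volume S).toReal = Real.pi * ρ ^ 2 := FluxAux.vol_ball ρ hρ0.le
  have hIconst : ∫ _ in S, (uP 2 : ℝ) = Real.pi * ρ ^ 2 * uP 2 := by
    rw [setIntegral_const, measureReal_def, hvol, smul_eq_mul]
  have hsum : ∫ y in S,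
      ((rigidAt uP ω h (mk3 (y 0) (y 1) (h + g y))) 2 -
        (rigidAt uP ω h (mk3 (y 0) (y 1) (h + g y))) 0 *
          fderivWithin ℝ g B y (EuclideanSpace.single 0 1) -
        (rigidAt uP ω h (mk3 (y 0) (y 1) (h + g y))) 1 *
          fderivWithin ℝ g B y (EuclideanSpace.single 1 1)) =
      Real.pi * ρ ^ 2 * uP 2 +
        ((∫ y in S, ω 0 * y 1) + (∫ y in S, -(ω 1) * y 0) +
        (∫ y in S, -(uP 0) * fderivWithin ℝ g B y (EuclideanSpace.single 0 1)) +
        (∫ y in S, -(uP 1) * fderivWithin ℝ g B y (EuclideanSpace.single 1 1)) +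
        (∫ y in S, -(ω 1) * (g y * fderivWithin ℝ g B y (EuclideanSpace.single 0 1))) +
        (∫ y in S, ω 0 * (g y * fderivWithin ℝ g B y (EuclideanSpace.single 1 1))) +
        (∫ y in S, ω 2 * (y 1 * fderivWithin ℝ g B y (EuclideanSpace.single 0 1)
          - y 0 * fderivWithin ℝ g B y (EuclideanSpace.single 1 1)))) := by
    rw [setIntegral_congr_fun measurableSet_ball hpt]
    have s6 : ∫ y in S, (ω 0 * y 1 + -(ω 1) * y 0 +
        -(uP 0) * fderivWithin ℝ g B y (EuclideanSpace.single 0 1) +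
        -(uP 1) * fderivWithin ℝ g B y (EuclideanSpace.single 1 1) +
        -(ω 1) * (g y * fderivWithin ℝ g B y (EuclideanSpace.single 0 1)) +
        ω 0 * (g y * fderivWithin ℝ g B y (EuclideanSpace.single 1 1)) +
        ω 2 * (y 1 * fderivWithin ℝ g B y (EuclideanSpace.single 0 1)
          - y 0 * fderivWithin ℝ g B y (EuclideanSpace.single 1 1))) =
        (∫ y in S, (ω 0 * y 1 + -(ω 1) * y 0 +
          -(uP 0) * fderivWithin ℝ g B y (EuclideanSpace.single 0 1) +
          -(uP 1) * fderivWithin ℝ g B y (EuclideanSpace.single 1 1) +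
          -(ω 1) * (g y * fderivWithin ℝ g B y (EuclideanSpace.single 0 1)) +
          ω 0 * (g y * fderivWithin ℝ g B y (EuclideanSpace.single 1 1)))) +
        ∫ y in S, ω 2 * (y 1 * fderivWithin ℝ g B y (EuclideanSpace.single 0 1)
          - y 0 * fderivWithin ℝ g B y (EuclideanSpace.single 1 1)) :=
      integral_add (((((i1.add i2).add i3).add i4).add i5).add i6) i7
    have s5 : ∫ y in S, (ω 0 * y 1 +
        -(ω 1) * y 0 +
        -(uP 0) * fderivWithin ℝ g B y (EuclideanSpace.single 0 1) +
        -(uP 1) * fderivWithin ℝ g B y (EuclideanSpace.single 1 1) +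
        -(ω 1) * (g y * fderivWithin ℝ g B y (EuclideanSpace.single 0 1)) +
        ω 0 * (g y * fderivWithin ℝ g B y (EuclideanSpace.single 1 1))) =
        (∫ y in S, (ω 0 * y 1 +
        -(ω 1) * y 0 +
        -(uP 0) * fderivWithin ℝ g B y (EuclideanSpace.single 0 1) +
        -(uP 1) * fderivWithin ℝ g B y (EuclideanSpace.single 1 1) +
        -(ω 1) * (g y * fderivWithin ℝ g B y (EuclideanSpace.single 0 1)))) +
        ∫ y in S, ω 0 * (g y * fderivWithin ℝ g B y (EuclideanSpace.single 1 1)) :=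
      integral_add ((((i1.add i2).add i3).add i4).add i5) i6
    have s4 : ∫ y in S, (ω 0 * y 1 +
        -(ω 1) * y 0 +
        -(uP 0) * fderivWithin ℝ g B y (EuclideanSpace.single 0 1) +
        -(uP 1) * fderivWithin ℝ g B y (EuclideanSpace.single 1 1) +
        -(ω 1) * (g y * fderivWithin ℝ g B y (EuclideanSpace.single 0 1))) =
        (∫ y in S, (ω 0 * y 1 +
        -(ω 1) * y 0 +
        -(uP 0) * fderivWithin ℝ g B y (EuclideanSpace.single 0 1) +
        -(uP 1) * fderivWithin ℝ g B y (EuclideanSpace.single 1 1))) +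
        ∫ y in S, -(ω 1) * (g y * fderivWithin ℝ g B y (EuclideanSpace.single 0 1)) :=
      integral_add (((i1.add i2).add i3).add i4) i5
    have s3 : ∫ y in S, (ω 0 * y 1 +
        -(ω 1) * y 0 +
        -(uP 0) * fderivWithin ℝ g B y (EuclideanSpace.single 0 1) +
        -(uP 1) * fderivWithin ℝ g B y (EuclideanSpace.single 1 1)) =
        (∫ y in S, (ω 0 * y 1 +
        -(ω 1) * y 0 +
        -(uP 0) * fderivWithin ℝ g B y (EuclideanSpace.single 0 1))) +
        ∫ y in S, -(uP 1) * fderivWithin ℝ g B y (EuclideanSpace.single 1 1) :=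
      integral_add ((i1.add i2).add i3) i4
    have s2 : ∫ y in S, (ω 0 * y 1 +
        -(ω 1) * y 0 +
        -(uP 0) * fderivWithin ℝ g B y (EuclideanSpace.single 0 1)) =
        (∫ y in S, (ω 0 * y 1 +
        -(ω 1) * y 0)) +
        ∫ y in S, -(uP 0) * fderivWithin ℝ g B y (EuclideanSpace.single 0 1) :=
      integral_add (i1.add i2) i3
    have s1 : ∫ y in S, (ω 0 * y 1 +
        -(ω 1) * y 0) =
        (∫ y in S, (ω 0 * y 1)) +
        ∫ y in S, -(ω 1) * y 0 :=
      integral_add i1 i2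
    have s0 : ∫ y in S, (uP 2 + (ω 0 * y 1 + -(ω 1) * y 0 +
        -(uP 0) * fderivWithin ℝ g B y (EuclideanSpace.single 0 1) +
        -(uP 1) * fderivWithin ℝ g B y (EuclideanSpace.single 1 1) +
        -(ω 1) * (g y * fderivWithin ℝ g B y (EuclideanSpace.single 0 1)) +
        ω 0 * (g y * fderivWithin ℝ g B y (EuclideanSpace.single 1 1)) +
        ω 2 * (y 1 * fderivWithin ℝ g B y (EuclideanSpace.single 0 1)
          - y 0 * fderivWithin ℝ g B y (EuclideanSpace.single 1 1)))) =
        (∫ _ in S, (uP 2 : ℝ)) +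
        ∫ y in S, (ω 0 * y 1 + -(ω 1) * y 0 +
          -(uP 0) * fderivWithin ℝ g B y (EuclideanSpace.single 0 1) +
          -(uP 1) * fderivWithin ℝ g B y (EuclideanSpace.single 1 1) +
          -(ω 1) * (g y * fderivWithin ℝ g B y (EuclideanSpace.single 0 1)) +
          ω 0 * (g y * fderivWithin ℝ g B y (EuclideanSpace.single 1 1)) +
          ω 2 * (y 1 * fderivWithin ℝ g B y (EuclideanSpace.single 0 1)
            - y 0 * fderivWithin ℝ g B y (EuclideanSpace.single 1 1))) :=
      integral_add iconst ((((((i1.add i2).add i3).add i4).add i5).add i6).add i7)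
    rw [s0, hIconst, s6, s5, s4, s3, s2, s1]
  -- evaluate / bound each piece
  have v1 : ∫ y in S, ω 0 * y 1 = 0 := by
    rw [integral_const_mul, hS, FluxAux.integral_ball_coord, mul_zero]
  have v2 : ∫ y in S, -(ω 1) * y 0 = 0 := by
    rw [integral_const_mul, hS, FluxAux.integral_ball_coord, mul_zero]
  have v7 : ∫ y in S, ω 2 * (y 1 * fderivWithin ℝ g B y (EuclideanSpace.single 0 1)
      - y 0 * fderivWithin ℝ g B y (EuclideanSpace.single 1 1)) = 0 := by
    rw [integral_const_mul, hS, hB,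
      FluxAux.rot_integral_zero K σ₀ ρ g hK0 hσ hρ0 hρσ hg hgb1, mul_zero]
  have hI0 : |∫ y in S, fderivWithin ℝ g B y (EuclideanSpace.single 0 1)| ≤
      K * ρ ^ 2 * (Real.pi * ρ ^ 2) :=
    FluxAux.taylor_bound K σ₀ ρ g hK0 hσ hρ0 hρσ hg hgb1 hgb3 _ he0
  have hI1 : |∫ y in S, fderivWithin ℝ g B y (EuclideanSpace.single 1 1)| ≤
      K * ρ ^ 2 * (Real.pi * ρ ^ 2) :=
    FluxAux.taylor_bound K σ₀ ρ g hK0 hσ hρ0 hρσ hg hgb1 hgb3 _ he1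
  have hJbd : ∀ (e : E2), ‖e‖ = 1 →
      |∫ y in S, g y * fderivWithin ℝ g B y e| ≤ (K * ρ ^ 2 * (K * ρ)) * (Real.pi * ρ ^ 2) := by
    intro e he
    have hptb : ∀ y ∈ S, ‖g y * fderivWithin ℝ g B y e‖ ≤ K * ρ ^ 2 * (K * ρ) := by
      intro y hy
      rw [Real.norm_eq_abs, abs_mul]
      exact mul_le_mul (hgb y hy) (hDb e he y hy) (abs_nonneg _) (by positivity)
    have hmeas : AEStronglyMeasurable (fun y => g y * fderivWithin ℝ g B y e)
        (volume.restrict S) :=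
      ((hcg.mono hSB).mul ((hcD.clm_apply continuousOn_const).mono hSB)).aestronglyMeasurable
        measurableSet_ball
    have := norm_setIntegral_le_of_norm_le_const (measure_ball_lt_top (μ := volume)) hptb
    rw [measureReal_def, hvol] at this
    exact this
  have hJ0 := hJbd _ he0
  have hJ1 := hJbd _ he1
  -- put everything together
  rw [hsum, v1, v2, v7]
  rw [integral_const_mul, integral_const_mul, integral_const_mul, integral_const_mul]
  have habs0 : |uP 0| ≤ pnorm uP := FluxAux.abs_apply0_le_pnorm uP
  have habs1 : |uP 1| ≤ pnorm uP := FluxAux.abs_apply1_le_pnorm uP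
  have hwabs0 : |ω 0| ≤ pnorm ω := FluxAux.abs_apply0_le_pnorm ω
  have hwabs1 : |ω 1| ≤ pnorm ω := FluxAux.abs_apply1_le_pnorm ω
  have hA : 0 ≤ pnorm uP := FluxAux.pnorm_nonneg uP
  have hW : 0 ≤ pnorm ω := FluxAux.pnorm_nonneg ω
  set I0 := ∫ y in S, fderivWithin ℝ g B y (EuclideanSpace.single 0 1) with hI0d
  set I1 := ∫ y in S, fderivWithin ℝ g B y (EuclideanSpace.single 1 1) with hI1d
  set J0 := ∫ y in S, g y * fderivWithin ℝ g B y (EuclideanSpace.single 0 1) with hJ0d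
  set J1 := ∫ y in S, g y * fderivWithin ℝ g B y (EuclideanSpace.single 1 1) with hJ1d
  have hexpr : Real.pi * ρ ^ 2 * uP 2 +
      (0 + 0 + -(uP 0) * I0 + -(uP 1) * I1 + -(ω 1) * J0 + ω 0 * J1 + 0) -
      Real.pi * ρ ^ 2 * uP 2 =
      -(uP 0) * I0 + -(uP 1) * I1 + -(ω 1) * J0 + ω 0 * J1 := by ring
  rw [hexpr]
  have htri : |(-(uP 0) * I0 + -(uP 1) * I1 + -(ω 1) * J0 + ω 0 * J1)| ≤
      |uP 0| * |I0| + |uP 1| * |I1| + |ω 1| * |J0| + |ω 0| * |J1| := by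
    calc |(-(uP 0) * I0 + -(uP 1) * I1 + -(ω 1) * J0 + ω 0 * J1)| ≤
        |(-(uP 0) * I0 + -(uP 1) * I1 + -(ω 1) * J0)| + |ω 0 * J1| := abs_add_le _ _
      _ ≤ |(-(uP 0) * I0 + -(uP 1) * I1)| + |(-(ω 1)) * J0| + |ω 0 * J1| := by
          gcongr; exact abs_add_le _ _
      _ ≤ |(-(uP 0)) * I0| + |(-(uP 1)) * I1| + |(-(ω 1)) * J0| + |ω 0 * J1| := by
          gcongr; exact abs_add_le _ _
      _ = |uP 0| * |I0| + |uP 1| * |I1| + |ω 1| * |J0| + |ω 0| * |J1| := by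
          rw [abs_mul, abs_mul, abs_mul, abs_mul, abs_neg, abs_neg, abs_neg]
  refine htri.trans ?_
  have hπ : Real.pi ≤ 3.15 := le_of_lt Real.pi_lt_d2
  have hπ0 : 0 ≤ Real.pi := Real.pi_nonneg
  have b1 : |uP 0| * |I0| ≤ pnorm uP * (K * ρ ^ 2 * (Real.pi * ρ ^ 2)) :=
    mul_le_mul habs0 hI0 (abs_nonneg _) hA
  have b2 : |uP 1| * |I1| ≤ pnorm uP * (K * ρ ^ 2 * (Real.pi * ρ ^ 2)) :=
    mul_le_mul habs1 hI1 (abs_nonneg _) hA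
  have b3 : |ω 1| * |J0| ≤ pnorm ω * ((K * ρ ^ 2 * (K * ρ)) * (Real.pi * ρ ^ 2)) :=
    mul_le_mul hwabs1 hJ0 (abs_nonneg _) hW
  have b4 : |ω 0| * |J1| ≤ pnorm ω * ((K * ρ ^ 2 * (K * ρ)) * (Real.pi * ρ ^ 2)) :=
    mul_le_mul hwabs0 hJ1 (abs_nonneg _) hW
  have hfin : pnorm uP * (K * ρ ^ 2 * (Real.pi * ρ ^ 2)) * 2 +
      pnorm ω * ((K * ρ ^ 2 * (K * ρ)) * (Real.pi * ρ ^ 2)) * 2 ≤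
      7 * K ^ 2 * (pnorm uP + pnorm ω * ρ) * ρ ^ 4 := by
    have hρ4 : (0:ℝ) ≤ ρ ^ 4 := by positivity
    have hρ5 : (0:ℝ) ≤ ρ ^ 5 := by positivity
    have hKK : K ≤ K ^ 2 := by nlinarith
    have c1' : 2 * Real.pi * K ≤ 7 * K ^ 2 := by nlinarith
    have c2' : 2 * Real.pi * K ^ 2 ≤ 7 * K ^ 2 := by nlinarith
    have e1 : pnorm uP * (K * ρ ^ 2 * (Real.pi * ρ ^ 2)) * 2 =
        (2 * Real.pi * K) * (pnorm uP * ρ ^ 4) := by ring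
    have e2 : pnorm ω * ((K * ρ ^ 2 * (K * ρ)) * (Real.pi * ρ ^ 2)) * 2 =
        (2 * Real.pi * K ^ 2) * (pnorm ω * ρ ^ 5) := by ring
    have e3 : 7 * K ^ 2 * (pnorm uP + pnorm ω * ρ) * ρ ^ 4 =
        (7 * K ^ 2) * (pnorm uP * ρ ^ 4) + (7 * K ^ 2) * (pnorm ω * ρ ^ 5) := by ring
    rw [e1, e2, e3]
    have p1 : (0:ℝ) ≤ pnorm uP * ρ ^ 4 := mul_nonneg hA hρ4
    have p2 : (0:ℝ) ≤ pnorm ω * ρ ^ 5 := mul_nonneg hW hρ5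
    exact add_le_add (mul_le_mul_of_nonneg_right c1' p1) (mul_le_mul_of_nonneg_right c2' p2)
  linarith [b1, b2, b3, b4, hfin]
end
end
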